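/- Let R be a non-noetherian archimedean valuation ring that is an IF-ring with maximal ideal P, and let E be a nonzero fp-injective R-module with ν(E) ≤ n, where ν(E) is the supremum of the minimal numbers of generators of finitely generated submodules of E. Then there exists a nonzero uniserial pure submodule U of E such that ν(E/U) ≤ n − 1. -/

import Mathlib

open IsLocalRing

universe u

/-- A chain (valuation) ring: ideals are totally ordered by inclusion. -/
def IsChainRing (R : Type u) [CommRing R] : Prop := ∀ I J : Ideal R, I ≤ J ∨ J ≤ I

/-- Archimedean: the maximal ideal is the only nonzero prime ideal. -/
def IsArchimedeanLocal (R : Type u) [CommRing R] [IsLocalRing R] : Prop :=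
  ∀ Q : Ideal R, Q.IsPrime → Q ≠ ⊥ → Q = maximalIdeal R

/-- The annihilator ideal `(0 : x)` of a module element. -/
def annOf (R : Type u) {M : Type u} [CommRing R] [AddCommGroup M] [Module R M] (x : M) :
    Ideal R := LinearMap.ker (LinearMap.toSpanSingleton R M x)

/-- fp-injective (absolutely pure): every homomorphism from a finitely generated
submodule of a finite free module extends; equivalently `Ext¹(F, M) = 0` for every
finitely presented `F`. -/
def IsFpInjective (R M : Type u) [CommRing R] [AddCommGroup M] [Module R M] : Prop :=
  ∀ (n : ℕ) (K : Submodule R (Fin n → R)), K.FG →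
    ∀ g : K →ₗ[R] M, ∃ h : (Fin n → R) →ₗ[R] M, ∀ x : K, h x = g x

/-- A coherent ring: every finitely generated ideal is finitely presented. -/
def IsCoherentRing (R : Type u) [CommRing R] : Prop :=
  ∀ I : Ideal R, I.FG → Module.FinitePresentation R ↥I

/-- An IF-ring: coherent and self fp-injective. -/
def IsIFRing (R : Type u) [CommRing R] : Prop := IsCoherentRing R ∧ IsFpInjective R R

/-- Purity of a submodule: `I·M ⊓ X = I·X` for every finitely generated ideal `I`. -/
def IsPureSubmodule {R M : Type u} [CommRing R] [AddCommGroup M] [Module R M]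
    (X : Submodule R M) : Prop :=
  ∀ I : Ideal R, I.FG → (I • (⊤ : Submodule R M)) ⊓ X = I • X

/-- A submodule is uniserial if its submodules are totally ordered by inclusion. -/
def IsUniserialSub {R M : Type u} [CommRing R] [AddCommGroup M] [Module R M]
    (U : Submodule R M) : Prop :=
  ∀ V W : Submodule R M, V ≤ U → W ≤ U → V ≤ W ∨ W ≤ V

/-- A uniserial module: submodules are totally ordered by inclusion. -/
def IsUniserialMod (R M : Type u) [CommRing R] [AddCommGroup M] [Module R M] : Prop :=
  ∀ V W : Submodule R M, V ≤ W ∨ W ≤ V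

/-- A faithful submodule: only `0` annihilates all its elements. -/
def IsFaithfulSub {R M : Type u} [CommRing R] [AddCommGroup M] [Module R M]
    (U : Submodule R M) : Prop := ∀ r : R, (∀ x ∈ U, r • x = 0) → r = 0

/-- A faithful module: its annihilator is zero. -/
def IsFaithfulMod (R M : Type u) [CommRing R] [AddCommGroup M] [Module R M] : Prop :=
  ∀ r : R, (∀ x : M, r • x = 0) → r = 0

/-- `μ(M)`: the minimal number of generators of a module. -/
noncomputable def mu (R M : Type u) [CommRing R] [AddCommGroup M] [Module R M] : ℕ :=
  sInf {n : ℕ | ∃ s : Finset M, s.card = n ∧ Submodule.span R (s : Set M) = ⊤}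

/-- A maximal ring: every family of cosets of ideals with the finite intersection
property has nonempty total intersection. -/
def IsMaximalRing (R : Type u) [CommRing R] : Prop :=
  ∀ (ι : Type u) (a : ι → R) (A : ι → Ideal R),
    (∀ s : Finset ι, ∃ x : R, ∀ i ∈ s, x - a i ∈ A i) → ∃ x : R, ∀ i, x - a i ∈ A i

/-- Almost maximal: `R/A` is maximal for every nonzero ideal `A`. -/
def IsAlmostMaximalRing (R : Type u) [CommRing R] : Prop :=
  ∀ A : Ideal R, A ≠ ⊥ → IsMaximalRing (R ⧸ A)

/-- A uniform module: any two nonzero submodules intersect nontrivially. -/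
def IsUniformMod (R M : Type u) [CommRing R] [AddCommGroup M] [Module R M] : Prop :=
  ∀ N₁ N₂ : Submodule R M, N₁ ≠ ⊥ → N₂ ≠ ⊥ → N₁ ⊓ N₂ ≠ ⊥

/-- Bounded module type with bound `n`: every finitely generated module is a direct
sum of submodules each generated by at most `n` elements. -/
def HasBoundedModuleType (R : Type u) [CommRing R] (n : ℕ) : Prop :=
  ∀ (M : Type u) [AddCommGroup M] [Module R M], Module.Finite R M →
    ∃ (ι : Type u) (N : ι → Submodule R M),
      iSupIndep N ∧ (⨆ i, N i) = ⊤ ∧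
      ∀ i, ∃ s : Finset M, s.card ≤ n ∧ Submodule.span R (s : Set M) = N i

namespace Stmt7Aux

variable {R : Type u} [CommRing R]

lemma mem_annOf {M : Type u} [AddCommGroup M] [Module R M] {x : M} {z : R} :
    z ∈ annOf R x ↔ z • x = 0 := by
  simp [annOf, LinearMap.mem_ker, LinearMap.toSpanSingleton_apply]

lemma chain_dvd (hchain : IsChainRing R) (a b : R) : a ∣ b ∨ b ∣ a := by
  rcases hchain (Ideal.span {a}) (Ideal.span {b}) with h | h
  · right; exact Ideal.span_singleton_le_span_singleton.1 h
  · left; exact Ideal.span_singleton_le_span_singleton.1 h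

lemma fg_principal (hchain : IsChainRing R) {I : Ideal R} (h : I.FG) :
    ∃ a, I = Ideal.span {a} := by
  classical
  obtain ⟨s, rfl⟩ := h
  induction s using Finset.induction_on with
  | empty => exact ⟨0, by rw [Finset.coe_empty, Ideal.span_empty, Ideal.span_singleton_eq_bot.mpr rfl]⟩
  | @insert b s hb ih =>
    obtain ⟨a, ha⟩ := ih
    rw [Finset.coe_insert, Ideal.span_insert, ha]
    rcases chain_dvd hchain a b with h' | h'
    · exact ⟨a, by rw [sup_eq_right.2 (Ideal.span_singleton_le_span_singleton.2 h')]⟩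
    · exact ⟨b, by rw [sup_eq_left.2 (Ideal.span_singleton_le_span_singleton.2 h')]⟩

lemma exists_smul_eq {M : Type u} [AddCommGroup M] [Module R M] (hM : IsFpInjective R M)
    (a : R) (x : M) (h : ∀ z : R, z * a = 0 → z • x = 0) : ∃ y, a • y = x := by
  classical
  set v : Fin 1 → R := fun _ => a with hv
  set μ : R →ₗ[R] (Fin 1 → R) := LinearMap.toSpanSingleton R _ v with hμ
  have hker : LinearMap.ker μ ≤ LinearMap.ker (LinearMap.toSpanSingleton R M x) := by
    intro z hz
    rw [LinearMap.mem_ker] at hz ⊢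
    have hza : z * a = 0 := by
      have := congrFun hz 0
      simpa [hμ, hv, LinearMap.toSpanSingleton_apply] using this
    simpa [LinearMap.toSpanSingleton_apply] using h z hza
  set K := LinearMap.range μ with hK
  have hKfg : K.FG := by
    rw [hK, hμ, ← LinearMap.span_singleton_eq_range]
    exact Submodule.fg_span_singleton v
  let g : K →ₗ[R] M :=
    (Submodule.liftQ (LinearMap.ker μ) (LinearMap.toSpanSingleton R M x) hker).comp
      (LinearMap.quotKerEquivRange μ).symm.toLinearMap
  obtain ⟨hmap, hh⟩ := hM 1 K hKfg g
  have hv1 : μ 1 = v := by simp [hμ, LinearMap.toSpanSingleton_apply]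
  have hvK : v ∈ K := ⟨1, hv1⟩
  have h2 : g ⟨v, hvK⟩ = x := by
    have he : (⟨v, hvK⟩ : K) = ⟨μ 1, ⟨1, rfl⟩⟩ := Subtype.ext hv1.symm
    have hsymm := LinearMap.quotKerEquivRange_symm_apply_image (f := μ) 1 ⟨1, rfl⟩
    show ((LinearMap.ker μ).liftQ (LinearMap.toSpanSingleton R M x) hker)
        (μ.quotKerEquivRange.symm ⟨v, hvK⟩) = x
    rw [he, hsymm, Submodule.mkQ_apply, Submodule.liftQ_apply,
      LinearMap.toSpanSingleton_apply, one_smul]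
  set o : Fin 1 → R := fun _ => (1:R) with ho
  refine ⟨hmap o, ?_⟩
  have h4 : a • o = v := by
    funext i; simp [ho, hv, smul_eq_mul]
  have h3 := hh ⟨v, hvK⟩
  calc a • hmap o = hmap (a • o) := (map_smul hmap a o).symm
    _ = hmap v := by rw [h4]
    _ = g ⟨v, hvK⟩ := h3
    _ = x := h2

lemma ann_fg (hIF : IsIFRing R) (a : R) : (annOf R a).FG := by
  classical
  have hfp := hIF.1 (Ideal.span {a}) (Submodule.fg_span_singleton a)
  let f : R →ₗ[R] ↥(Ideal.span {a} : Ideal R) :=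
    LinearMap.codRestrict _ (LinearMap.toSpanSingleton R R a)
      (fun r => by
        simp only [LinearMap.toSpanSingleton_apply, smul_eq_mul]
        exact Ideal.mul_mem_left _ r (Ideal.mem_span_singleton_self a))
  have hsurj : Function.Surjective f := by
    rintro ⟨z, hz⟩
    obtain ⟨r, hr⟩ := Ideal.mem_span_singleton'.1 hz
    exact ⟨r, Subtype.ext (by simpa [f, LinearMap.toSpanSingleton_apply] using hr)⟩
    
  have hk : LinearMap.ker f = annOf R a := LinearMap.ker_codRestrict _ _ _
  rw [← hk]
  exact Module.FinitePresentation.fg_ker (h := hfp) f hsurj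

lemma exists_dual (hchain : IsChainRing R) (hIF : IsIFRing R) :
    ∃ dd : R → R, ∀ a, annOf R a = Ideal.span {dd a} :=
  ⟨fun a => (fg_principal hchain (ann_fg hIF a)).choose,
   fun a => (fg_principal hchain (ann_fg hIF a)).choose_spec⟩

section Dual

variable (dd : R → R)

lemma dual_mul_self (hdd : ∀ a : R, annOf R a = Ideal.span {dd a}) (a : R) :
    dd a * a = 0 := by
  have : dd a ∈ annOf R a := by rw [hdd]; exact Ideal.mem_span_singleton_self _
  simpa [smul_eq_mul] using mem_annOf.1 this

lemma dual_ann (hdd : ∀ a : R, annOf R a = Ideal.span {dd a}) (hIF : IsIFRing R)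
    (a z : R) (hz : z * dd a = 0) : a ∣ z := by
  obtain ⟨y, hy⟩ := exists_smul_eq hIF.2 a z (fun w hw => by
    have : w ∈ annOf R a := mem_annOf.2 (by simpa [smul_eq_mul] using hw)
    rw [hdd, Ideal.mem_span_singleton] at this
    obtain ⟨t, rfl⟩ := this
    show (dd a * t) * z = 0
    calc (dd a * t) * z = t * (z * dd a) := by ring
      _ = 0 := by rw [hz, mul_zero])
  exact ⟨y, by rw [← hy, smul_eq_mul]⟩

lemma dual_ne_zero (hdd : ∀ a : R, annOf R a = Ideal.span {dd a}) (hIF : IsIFRing R)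
    {a : R} (ha : ¬ IsUnit a) : dd a ≠ 0 := by
  intro h0
  exact ha (isUnit_of_dvd_one (dual_ann dd hdd hIF a 1 (by rw [h0, mul_zero])))

lemma eq_zero_of_dual_unit (hdd : ∀ a : R, annOf R a = Ideal.span {dd a})
    {a : R} (ha : IsUnit (dd a)) : a = 0 := by
  have : (1 : R) ∈ annOf R a := by
    rw [hdd, Ideal.span_singleton_eq_top.2 ha]; trivial
  simpa [smul_eq_mul] using mem_annOf.1 this

end Dual

variable [IsLocalRing R]

lemma eq_zero_of_forall_pow_dvd (hchain : IsChainRing R) (harch : IsArchimedeanLocal R)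
    {e z : R} (he : e ∈ maximalIdeal R) (h : ∀ n : ℕ, e ^ n ∣ z) : z = 0 := by
  by_contra hz
  by_cases hnil : ∃ N, e ^ N = 0
  · obtain ⟨N, hN⟩ := hnil
    exact hz (zero_dvd_iff.1 (hN ▸ h N))
  push_neg at hnil
  set Q : Ideal R :=
    { carrier := {w | ∀ n, e ^ n ∣ w}
      add_mem' := fun ha hb n => dvd_add (ha n) (hb n)
      zero_mem' := fun n => dvd_zero _
      smul_mem' := fun c w hw n => by simpa [smul_eq_mul] using (hw n).mul_left c } with hQdef
  have hQmem : ∀ w, w ∈ Q ↔ ∀ n, e ^ n ∣ w := fun w => Iff.rfl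
  have hQne : Q ≠ ⊥ := by
    intro hQ
    exact hz (by rw [← Submodule.mem_bot (R := R), ← hQ]; exact fun n => h n)
  have hQprime : Q.IsPrime := by
    constructor
    · intro htop
      have h1 : (1 : R) ∈ Q := htop ▸ Submodule.mem_top
      have := h1 1
      rw [pow_one] at this
      exact he (isUnit_of_dvd_one this)
    · intro x y hxy
      by_contra hc
      push_neg at hc
      obtain ⟨hx, hy⟩ := hc
      obtain ⟨i, hi⟩ := not_forall.1 hx
      obtain ⟨j, hj⟩ := not_forall.1 hy
      have hxi : x ∣ e ^ i := (chain_dvd hchain (e ^ i) x).resolve_left hi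
      have hyj : y ∣ e ^ j := (chain_dvd hchain (e ^ j) y).resolve_left hj
      have h1 : x * y ∣ e ^ (i + j) := by rw [pow_add]; exact mul_dvd_mul hxi hyj
      have h2 : e ^ (i + j + 1) ∣ e ^ (i + j) := (hxy (i + j + 1)).trans h1
      obtain ⟨t, ht⟩ := h2
      have h3 : e ^ (i + j) * (1 - e * t) = 0 := by
        rw [pow_succ] at ht
        linear_combination ht
      have hu : IsUnit (1 - e * t) :=
        isUnit_one_sub_self_of_mem_nonunits _ (Ideal.mul_mem_right t _ he)
      exact hnil (i + j) (by
        obtain ⟨u, hu'⟩ := hu.exists_right_inv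
        calc e ^ (i+j) = e ^ (i+j) * ((1 - e*t) * u) := by rw [hu', mul_one]
          _ = (e ^ (i+j) * (1 - e*t)) * u := by ring
          _ = 0 := by rw [h3, zero_mul])
  have hQP := harch Q hQprime hQne
  have he2 : e ∈ Q := hQP ▸ he
  obtain ⟨t, ht⟩ := he2 2
  have h3 : e * (1 - e * t) = 0 := by
    rw [pow_two] at ht
    linear_combination ht
  have hu : IsUnit (1 - e * t) :=
    isUnit_one_sub_self_of_mem_nonunits _ (Ideal.mul_mem_right t _ he)
  have he0 : e = 0 := by
    obtain ⟨u, hu'⟩ := hu.exists_right_inv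
    calc e = e * ((1 - e*t) * u) := by rw [hu', mul_one]
      _ = (e * (1 - e*t)) * u := by ring
      _ = 0 := by rw [h3, zero_mul]
  exact hnil 1 (by rw [pow_one, he0])

lemma noetherian_of_principal_max (hchain : IsChainRing R) (harch : IsArchimedeanLocal R)
    {p : R} (hp : maximalIdeal R = Ideal.span {p}) : IsNoetherianRing R := by
  classical
  rw [isNoetherianRing_iff_ideal_fg]
  intro I
  by_cases hI : I = ⊥
  · exact hI ▸ ⟨∅, by simp⟩
  have hpP : p ∈ maximalIdeal R := hp ▸ Ideal.mem_span_singleton_self p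
  -- every nonzero element is an associate of a power of p
  have key : ∀ z : R, z ≠ 0 → ∃ k : ℕ, Ideal.span {z} = Ideal.span {p ^ k} := by
    intro z hz
    have hex : ∃ k, ¬ p ^ (k + 1) ∣ z := by
      by_contra hall
      push_neg at hall
      refine hz (eq_zero_of_forall_pow_dvd hchain harch hpP (fun n => ?_))
      cases n with
      | zero => simpa using one_dvd z
      | succ m => exact hall m
    set k := Nat.find hex with hk
    have hk1 : ¬ p ^ (k + 1) ∣ z := Nat.find_spec hex
    have hk2 : p ^ k ∣ z := by
      cases hkz : k with
      | zero => simpa using one_dvd z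
      | succ m =>
        by_contra hnd
        have := Nat.find_min hex (m := m) (by omega)
        push_neg at this
        exact hnd this
    obtain ⟨u, hu⟩ := hk2
    have hunit : IsUnit u := by
      by_contra hnu
      have humem : u ∈ maximalIdeal R := hnu
      rw [hp, Ideal.mem_span_singleton] at humem
      obtain ⟨t, rfl⟩ := humem
      exact hk1 ⟨t, by rw [hu]; ring⟩
    refine ⟨k, le_antisymm (Ideal.span_singleton_le_span_singleton.2 ⟨u, hu⟩)
      (Ideal.span_singleton_le_span_singleton.2 ?_)⟩
    obtain ⟨w, hw⟩ := hunit.exists_right_inv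
    exact ⟨w, by rw [hu, mul_assoc, hw, mul_one]⟩
  obtain ⟨z, hzI, hz0⟩ := (Submodule.ne_bot_iff _).1 hI
  have hSex : ∃ k : ℕ, p ^ k ∈ I := by
    obtain ⟨k, hk⟩ := key z hz0
    exact ⟨k, by
      have : p ^ k ∈ Ideal.span {z} := hk ▸ Ideal.mem_span_singleton_self _
      obtain ⟨t, ht⟩ := Ideal.mem_span_singleton'.1 this
      exact ht ▸ Ideal.mul_mem_left I t hzI⟩
  set k₀ := Nat.find hSex with hk₀
  refine ⟨{p ^ k₀}, ?_⟩
  apply le_antisymm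
  · rw [Finset.coe_singleton, Ideal.span_le, Set.singleton_subset_iff]
    exact Nat.find_spec hSex
  · intro w hw
    by_cases hw0 : w = 0
    · simp [hw0, Submodule.zero_mem]
    obtain ⟨kw, hkw⟩ := key w hw0
    have hkwI : p ^ kw ∈ I := by
      have : p ^ kw ∈ Ideal.span {w} := hkw ▸ Ideal.mem_span_singleton_self _
      obtain ⟨t, ht⟩ := Ideal.mem_span_singleton'.1 this
      exact ht ▸ Ideal.mul_mem_left I t hw
    have hle : k₀ ≤ kw := Nat.find_min' hSex hkwI
    have hwmem : w ∈ Ideal.span {p ^ kw} := hkw ▸ Ideal.mem_span_singleton_self w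
    rw [Finset.coe_singleton]
    rw [Ideal.mem_span_singleton] at hwmem ⊢
    exact (pow_dvd_pow p hle).trans hwmem

lemma max_ne_bot (hnoeth : ¬ IsNoetherianRing R) : maximalIdeal R ≠ ⊥ := by
  intro h
  apply hnoeth
  rw [isNoetherianRing_iff_ideal_fg]
  intro I
  by_cases hI : I = ⊤
  · exact hI ▸ ⟨{1}, by simp [Ideal.span_singleton_one]⟩
  · have : I ≤ ⊥ := h ▸ IsLocalRing.le_maximalIdeal hI
    rw [le_bot_iff] at this
    exact this ▸ ⟨∅, by simp⟩

lemma exists_sq_dvd (hchain : IsChainRing R) (harch : IsArchimedeanLocal R)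
    (hnoeth : ¬ IsNoetherianRing R) {e : R} (he : e ∈ maximalIdeal R) (he0 : e ≠ 0) :
    ∃ f, f ∈ maximalIdeal R ∧ f ≠ 0 ∧ f ^ 2 ∣ e := by
  have hnotspan : ¬ (maximalIdeal R ≤ Ideal.span {e}) := by
    intro hle
    have : maximalIdeal R = Ideal.span {e} :=
      le_antisymm hle ((Ideal.span_singleton_le_iff_mem _).2 he)
    exact hnoeth (noetherian_of_principal_max hchain harch this)
  obtain ⟨b, hbP, hbns⟩ := SetLike.not_le_iff_exists.1 hnotspan
  have hbdvd : b ∣ e := by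
    rcases chain_dvd hchain e b with h | h
    · exact absurd (Ideal.mem_span_singleton.2 h) hbns
    · exact h
  obtain ⟨c, hc⟩ := hbdvd
  have hb0 : b ≠ 0 := by rintro rfl; exact he0 (by rw [hc, zero_mul])
  have hc0 : c ≠ 0 := by rintro rfl; exact he0 (by rw [hc, mul_zero])
  have hcP : c ∈ maximalIdeal R := by
    by_contra hcu
    have : IsUnit c := by rwa [IsLocalRing.mem_maximalIdeal, mem_nonunits_iff, not_not] at hcu
    obtain ⟨u, hu'⟩ := this.exists_right_inv
    exact hbns (Ideal.mem_span_singleton.2 ⟨u, by linear_combination (-u) * hc + (-b) * hu'⟩)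
  rcases chain_dvd hchain b c with h | h
  · obtain ⟨t, ht⟩ := h
    exact ⟨b, hbP, hb0, ⟨t, by rw [hc, ht, pow_two]; ring⟩⟩
  · obtain ⟨t, ht⟩ := h
    exact ⟨c, hcP, hc0, ⟨t, by rw [hc, ht, pow_two]; ring⟩⟩

lemma exists_coinitial_seq (hchain : IsChainRing R) (harch : IsArchimedeanLocal R)
    (hnoeth : ¬ IsNoetherianRing R) :
    ∃ d : ℕ → R, (∀ j, d j ∈ maximalIdeal R ∧ d j ≠ 0) ∧
      ∀ e, e ∈ maximalIdeal R → e ≠ 0 → ∃ j, d j ∣ e := by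
  classical
  obtain ⟨d₀, hd₀P, hd₀0⟩ := (Submodule.ne_bot_iff _).1 (max_ne_bot hnoeth)
  have step : ∀ p : {x : R // x ∈ maximalIdeal R ∧ x ≠ 0},
      ∃ q : {x : R // x ∈ maximalIdeal R ∧ x ≠ 0}, (q : R) ^ 2 ∣ (p : R) := by
    rintro ⟨e, heP, he0⟩
    obtain ⟨f, hfP, hf0, hfd⟩ := exists_sq_dvd hchain harch hnoeth heP he0
    exact ⟨⟨f, hfP, hf0⟩, hfd⟩
  choose stepf hstep using step
  set F : ℕ → {x : R // x ∈ maximalIdeal R ∧ x ≠ 0} :=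
    fun j => Nat.rec ⟨d₀, hd₀P, hd₀0⟩ (fun _ p => stepf p) j with hF
  refine ⟨fun j => (F j : R), fun j => (F j).2, ?_⟩
  intro e heP he0
  by_contra hcon
  push_neg at hcon
  have hdvd : ∀ j, e ∣ (F j : R) := by
    intro j
    exact (chain_dvd hchain ((F j : R)) e).resolve_left (hcon j)
  have hpow : ∀ j, ((F j : R)) ^ (2 ^ j) ∣ (F 0 : R) := by
    intro j
    induction j with
    | zero => simpa using dvd_refl (F 0 : R)
    | succ m ih =>
      have h1 : (F (m+1) : R) ^ 2 ∣ (F m : R) := hstep (F m)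
      calc (F (m+1) : R) ^ (2 ^ (m+1)) = ((F (m+1) : R) ^ 2) ^ (2 ^ m) := by
            rw [← pow_mul, pow_succ, mul_comm]
        _ ∣ (F m : R) ^ (2 ^ m) := pow_dvd_pow_of_dvd h1 _
        _ ∣ (F 0 : R) := ih
  have hall : ∀ n : ℕ, e ^ n ∣ (F 0 : R) := by
    intro n
    calc e ^ n ∣ e ^ (2 ^ n) := pow_dvd_pow e (Nat.le_of_lt (Nat.lt_two_pow_self (n := n)))
      _ ∣ ((F n : R)) ^ (2 ^ n) := pow_dvd_pow_of_dvd (hdvd n) _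
      _ ∣ (F 0 : R) := hpow n
  exact (F 0).2.2 (eq_zero_of_forall_pow_dvd hchain harch heP hall)

lemma exists_dominating (hchain : IsChainRing R) (harch : IsArchimedeanLocal R)
    {d : R} (hd : d ∈ maximalIdeal R) (hd0 : d ≠ 0)
    {A : Ideal R} (hA : A ≠ ⊥) : ∃ c ∈ A, c ≠ 0 ∧ ∀ z ∈ A, c ∣ d * z := by
  by_contra hcon
  push_neg at hcon
  have key : ∀ (n : ℕ), ∀ c ∈ A, d ^ n ∣ c := by
    intro n
    induction n with
    | zero => intro c _; simpa using one_dvd c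
    | succ m ih =>
      intro c hc
      by_cases hc0 : c = 0
      · simp [hc0]
      obtain ⟨z, hz, hndvd⟩ := hcon c hc hc0
      have hdz : d * z ∣ c := (chain_dvd hchain c (d * z)).resolve_left hndvd
      obtain ⟨t, ht⟩ := hdz
      have h1 : d ^ m ∣ z * t := ih _ (Ideal.mul_mem_right t _ hz)
      obtain ⟨u, hu⟩ := h1
      exact ⟨u, by rw [pow_succ]; linear_combination ht + d * hu⟩
  obtain ⟨c, hcA, hc0⟩ := (Submodule.ne_bot_iff _).1 hA
  exact hc0 (eq_zero_of_forall_pow_dvd hchain harch hd (fun n => key n c hcA))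


section MuHelpers

variable {M : Type u} [AddCommGroup M] [Module R M]

lemma span_top_subtype (N : Submodule R M) (s : Finset M)
    (hs : Submodule.span R (↑s : Set M) = N) :
    ∃ t : Finset ↥N, t.card = s.card ∧ Submodule.span R (↑t : Set ↥N) = ⊤ := by
  classical
  have hsub : ∀ g ∈ s, g ∈ N := fun g hg => hs ▸ Submodule.subset_span hg
  set ff : {g // g ∈ s} → ↥N := fun g => (⟨g.1, hsub g.1 g.2⟩ : ↥N) with hff
  have hinj : Function.Injective ff := by
    intro a b hab
    exact Subtype.ext (congrArg (Subtype.val : ↥N → M) hab)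
  refine ⟨s.attach.image ff, ?_, ?_⟩
  · rw [Finset.card_image_of_injective _ hinj, Finset.card_attach]
  · apply Submodule.map_injective_of_injective N.injective_subtype
    rw [Submodule.map_span, Submodule.map_top, Submodule.range_subtype]
    have himg : N.subtype '' (↑(s.attach.image ff) : Set ↥N) = (↑s : Set M) := by
      ext g
      constructor
      · rintro ⟨y, hy, rfl⟩
        rw [Finset.coe_image] at hy
        obtain ⟨a, _, rfl⟩ := hy
        exact a.2
      · intro hg
        refine ⟨ff ⟨g, hg⟩, ?_, rfl⟩
        rw [Finset.coe_image]
        exact ⟨⟨g, hg⟩, Finset.mem_coe.2 (Finset.mem_attach _ _), rfl⟩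
    rw [himg, hs]

lemma mu_le_card (N : Submodule R M) (s : Finset M)
    (hs : Submodule.span R (↑s : Set M) = N) : mu R ↥N ≤ s.card := by
  obtain ⟨t, htc, hts⟩ := span_top_subtype N s hs
  exact Nat.sInf_le ⟨t, htc, hts⟩

lemma exists_span_finset (N : Submodule R M) (hfg : N.FG) (k : ℕ) (hk : mu R ↥N ≤ k) :
    ∃ s : Finset M, s.card ≤ k ∧ Submodule.span R (↑s : Set M) = N := by
  classical
  obtain ⟨s₀, hs₀⟩ := hfg
  obtain ⟨t₀, _, hts₀⟩ := span_top_subtype N s₀ hs₀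
  have hne : {n : ℕ | ∃ t : Finset ↥N, t.card = n ∧
      Submodule.span R (↑t : Set ↥N) = ⊤}.Nonempty := ⟨t₀.card, t₀, rfl, hts₀⟩
  obtain ⟨t, htc, hts⟩ := Nat.sInf_mem hne
  refine ⟨t.image Subtype.val, ?_, ?_⟩
  · calc (t.image Subtype.val).card ≤ t.card := Finset.card_image_le
      _ ≤ k := by
        have htc' : t.card = mu R ↥N := htc
        exact le_trans (le_of_eq htc') hk
  · have : Submodule.span R (N.subtype '' (↑t : Set ↥N)) = N := by
      rw [← Submodule.map_span, hts, Submodule.map_top, Submodule.range_subtype]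
    simpa [Finset.coe_image] using this

lemma smul_factor (hchain : IsChainRing R) {G : Submodule R M} {y : M}
    (hy : y ∈ (maximalIdeal R) • G) :
    ∃ b ∈ maximalIdeal R, ∃ e ∈ G, y = b • e := by
  refine Submodule.smul_induction_on hy ?_ ?_
  · intro r hr n hn; exact ⟨r, hr, n, hn, rfl⟩
  · rintro z₁ z₂ ⟨b₁, hb₁, e₁, he₁, rfl⟩ ⟨b₂, hb₂, e₂, he₂, rfl⟩
    rcases chain_dvd hchain b₁ b₂ with ⟨t, rfl⟩ | ⟨t, rfl⟩
    · refine ⟨b₁, hb₁, e₁ + t • e₂, G.add_mem he₁ (G.smul_mem t he₂), ?_⟩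
      rw [smul_add, smul_smul]
    · refine ⟨b₂, hb₂, t • e₁ + e₂, G.add_mem (G.smul_mem t he₁) he₂, ?_⟩
      rw [smul_add, smul_smul]

lemma smul_single_factor {I : Ideal R} {y q₀ : M}
    (hy : y ∈ I • Submodule.span R {q₀}) : ∃ q ∈ I, y = q • q₀ := by
  refine Submodule.smul_induction_on hy ?_ ?_
  · intro r hr nn hn
    obtain ⟨c, hc⟩ := Submodule.mem_span_singleton.1 hn
    exact ⟨r * c, I.mul_mem_right c hr, by rw [← hc, smul_smul]⟩
  · rintro z₁ z₂ ⟨q₁, h₁, rfl⟩ ⟨q₂, h₂, rfl⟩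
    exact ⟨q₁ + q₂, I.add_mem h₁ h₂, by rw [add_smul]⟩

lemma mem_span_singleton_smul_top {a : R} {z : M}
    (hz : z ∈ Ideal.span {a} • (⊤ : Submodule R M)) : ∃ e, z = a • e := by
  refine Submodule.smul_induction_on hz ?_ ?_
  · intro r hr nn _
    obtain ⟨t, rfl⟩ := Ideal.mem_span_singleton.1 hr
    exact ⟨t • nn, by rw [smul_smul]⟩
  · rintro z₁ z₂ ⟨e₁, rfl⟩ ⟨e₂, rfl⟩
    exact ⟨e₁ + e₂, by rw [smul_add]⟩

end MuHelpers

lemma master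
    (hchain : IsChainRing R)
    {E : Type u} [AddCommGroup E] [Module R E]
    (n : ℕ) (hn : ∀ N : Submodule R E, N.FG → mu R ↥N ≤ n)
    (dd : R → R) (hdd : ∀ a : R, annOf R a = Ideal.span {dd a})
    (hIF : IsIFRing R)
    (x : ℕ → E) (w : ℕ → ℕ → R)
    (hx0 : ∀ m, x m ≠ 0)
    (hw : ∀ k m, k ≤ m → (w k m) • x m = x k)
    (hKP : ∀ (b r : R) (k : ℕ), b ≠ 0 → (b * r) • x k = 0 → ∃ m, k ≤ m ∧ b * (r * w k m) = 0)
    (hQB : ∀ G : Submodule R E, G.FG → ¬ ∀ m, x m ∈ (maximalIdeal R) • G) :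
    ∃ U : Submodule R E, U ≠ ⊥ ∧ IsUniserialSub U ∧ IsPureSubmodule U ∧
      ∀ N : Submodule R (E ⧸ U), N.FG → mu R ↥N ≤ n - 1 := by
  classical
  set S : ℕ → Submodule R E := fun m => Submodule.span R {x m} with hS
  have hmono : ∀ k m, k ≤ m → S k ≤ S m := by
    intro k m hkm
    rw [hS]
    simp only
    rw [Submodule.span_singleton_le_iff_mem]
    exact Submodule.mem_span_singleton.2 ⟨w k m, hw k m hkm⟩
  have hdir : Directed (· ≤ ·) S := fun k m =>
    ⟨max k m, hmono _ _ (le_max_left _ _), hmono _ _ (le_max_right _ _)⟩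
  set U : Submodule R E := ⨆ m, S m with hU
  have hmem : ∀ z, z ∈ U ↔ ∃ (m : ℕ) (r : R), z = r • x m := by
    intro z
    rw [hU, Submodule.mem_iSup_of_directed S hdir]
    constructor
    · rintro ⟨m, hm⟩
      obtain ⟨r, hr⟩ := Submodule.mem_span_singleton.1 hm
      exact ⟨m, r, hr.symm⟩
    · rintro ⟨m, r, rfl⟩
      exact ⟨m, Submodule.smul_mem _ r (Submodule.mem_span_singleton_self _)⟩
  have hxU : ∀ m, x m ∈ U := fun m => (hmem _).2 ⟨m, 1, (one_smul R _).symm⟩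
  refine ⟨U, ?_, ?_, ?_, ?_⟩
  · intro h
    exact hx0 0 (by
      have h0 := hxU 0
      rw [h, Submodule.mem_bot] at h0
      exact h0)
  · intro V W hV hW
    by_cases hVW : V ≤ W
    · exact Or.inl hVW
    · right
      obtain ⟨v₀, hv₀V, hv₀W⟩ := SetLike.not_le_iff_exists.1 hVW
      intro z hzW
      obtain ⟨k, r, hr⟩ := (hmem v₀).1 (hV hv₀V)
      obtain ⟨m, s, hs⟩ := (hmem z).1 (hW hzW)
      set MM := max k m with hMM
      have h1 : v₀ = (r * w k MM) • x MM := by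
        rw [hr, ← hw k MM (le_max_left _ _), smul_smul]
      have h2 : z = (s * w m MM) • x MM := by
        rw [hs, ← hw m MM (le_max_right _ _), smul_smul]
      rcases chain_dvd hchain (r * w k MM) (s * w m MM) with ⟨t, ht⟩ | ⟨t, ht⟩
      · rw [h2, ht, mul_comm, mul_smul, ← h1]
        exact V.smul_mem t hv₀V
      · exfalso
        apply hv₀W
        rw [h1, ht, mul_comm, mul_smul, ← h2]
        exact W.smul_mem t hzW
  · intro I hIfg
    obtain ⟨a, rfl⟩ := fg_principal hchain hIfg
    apply le_antisymm
    · rintro z hz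
      rw [Submodule.mem_inf] at hz
      obtain ⟨hz1, hz2⟩ := hz
      obtain ⟨e, he⟩ := mem_span_singleton_smul_top hz1
      by_cases ha : IsUnit a
      · obtain ⟨u, hu⟩ := ha.exists_right_inv
        have hzz : z = a • (u • z) := by rw [smul_smul, hu, one_smul]
        rw [hzz]
        exact Submodule.smul_mem_smul (Ideal.mem_span_singleton_self a) (U.smul_mem u hz2)
      by_cases ha0 : a = 0
      · subst ha0
        rw [zero_smul] at he
        rw [he]
        exact Submodule.zero_mem _
      have hb0 : dd a ≠ 0 := dual_ne_zero dd hdd hIF ha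
      have hbz : dd a • z = 0 := by
        rw [he, smul_smul, dual_mul_self dd hdd a, zero_smul]
      obtain ⟨k, r, hr⟩ := (hmem z).1 hz2
      have hbrx : (dd a * r) • x k = 0 := by
        rw [mul_smul, ← hr, hbz]
      obtain ⟨m, hkm, h0⟩ := hKP (dd a) r k hb0 hbrx
      have hdvd : a ∣ r * w k m :=
        dual_ann dd hdd hIF a _ (by rw [mul_comm]; exact h0)
      obtain ⟨s, hs⟩ := hdvd
      have hzz : z = a • (s • x m) := by
        rw [hr, ← hw k m hkm, smul_smul, hs, mul_smul]
      rw [hzz]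
      exact Submodule.smul_mem_smul (Ideal.mem_span_singleton_self a)
        ((hmem _).2 ⟨m, s, rfl⟩)
    · apply Submodule.smul_le.2
      intro r hr u hu
      exact Submodule.mem_inf.2
        ⟨Submodule.smul_mem_smul hr Submodule.mem_top, U.smul_mem r hu⟩
  · intro N hNfg
    obtain ⟨t, ht⟩ := hNfg
    set π := U.mkQ with hπ
    have hπs : Function.Surjective π := U.mkQ_surjective
    set pre : E ⧸ U → E := Function.surjInv hπs with hpre
    have hpre' : ∀ q, π (pre q) = q := fun q => Function.surjInv_eq hπs q
    set s₀ := t.image pre with hs₀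
    set G := Submodule.span R (↑s₀ : Set E) with hG
    have hGfg : G.FG := ⟨s₀, rfl⟩
    have hmapG : Submodule.map π G = N := by
      rw [hG, Submodule.map_span, hs₀, Finset.coe_image, Set.image_image]
      have himg : (fun q => π (pre q)) '' ↑t = ↑t := by
        ext q
        constructor
        · rintro ⟨q', hq', rfl⟩
          show π (pre q') ∈ (↑t : Set (E ⧸ U))
          rw [hpre' q']
          exact hq'
        · intro hq
          exact ⟨q, hq, hpre' q⟩
      rw [himg, ht]
    obtain ⟨m₁, hm₁⟩ := not_forall.1 (hQB G hGfg)
    set H := G ⊔ Submodule.span R {x m₁} with hH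
    have hHfg : H.FG := Submodule.FG.sup hGfg (Submodule.fg_span_singleton _)
    have hxH : x m₁ ∈ H := Submodule.mem_sup_right (Submodule.mem_span_singleton_self (x m₁))
    have hxPH : x m₁ ∉ (maximalIdeal R) • H := by
      intro hmem'
      apply hm₁
      rw [hH, Submodule.smul_sup] at hmem'
      obtain ⟨u, hu, v, hv, huv⟩ := Submodule.mem_sup.1 hmem'
      obtain ⟨q, hqP, hq⟩ := smul_single_factor hv
      have h1 : (1 - q) • x m₁ = u := by
        rw [sub_smul, one_smul, ← hq, ← huv]
        abel
      have hqu : IsUnit (1 - q) := isUnit_one_sub_self_of_mem_nonunits q hqP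
      obtain ⟨vinv, hvinv⟩ := hqu.exists_left_inv
      have hx1 : x m₁ = vinv • u := by
        rw [← h1, smul_smul, hvinv, one_smul]
      rw [hx1]
      exact Submodule.smul_mem _ vinv hu
    have hmuH := hn H hHfg
    obtain ⟨s, hscard, hsspan⟩ := exists_span_finset H hHfg n hmuH
    have hxs : x m₁ ∈ Submodule.span R (↑s : Set E) := by rw [hsspan]; exact hxH
    obtain ⟨f, -, hf⟩ := Submodule.mem_span_finset.1 hxs
    have hex : ∃ g₀ ∈ s, f g₀ ∉ maximalIdeal R := by
      by_contra hall
      push_neg at hall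
      apply hxPH
      rw [← hf]
      refine Submodule.sum_mem _ (fun g hg => ?_)
      exact Submodule.smul_mem_smul (hall g hg) (hsspan ▸ Submodule.subset_span hg)
    obtain ⟨g₀, hg₀s, hg₀⟩ := hex
    have hg₀u : IsUnit (f g₀) := by
      rwa [IsLocalRing.mem_maximalIdeal, mem_nonunits_iff, not_not] at hg₀
    have hπx : π (x m₁) = 0 := by
      rw [hπ, Submodule.mkQ_apply, Submodule.Quotient.mk_eq_zero]
      exact hxU m₁
    have hNspan : Submodule.span R (π '' (↑(s.erase g₀) : Set E)) = N := by
      have hNH : Submodule.map π H = N := by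
        rw [hH, Submodule.map_sup, hmapG, Submodule.map_span, Set.image_singleton, hπx,
          Submodule.span_zero_singleton, sup_bot_eq]
      have hsH : Submodule.span R (π '' (↑s : Set E)) = N := by
        rw [← Submodule.map_span, hsspan, hNH]
      apply le_antisymm
      · rw [← hsH]
        exact Submodule.span_mono (Set.image_mono (fun g hg => (Finset.erase_subset _ _) hg))
      · rw [← hsH, Submodule.span_le]
        rintro y ⟨g, hg, rfl⟩
        by_cases hgg : g = g₀
        · subst hgg
          obtain ⟨vinv, hvinv⟩ := hg₀u.exists_left_inv
          have hsplit : f g • g + ∑ i ∈ s.erase g, f i • i = x m₁ :=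
            (Finset.add_sum_erase s (fun i => f i • i) hg₀s).trans hf
          have h0' : f g • π g + ∑ i ∈ s.erase g, f i • π i = 0 := by
            have hc := congrArg π hsplit
            rw [map_add, map_smul, map_sum, hπx] at hc
            simpa [map_smul] using hc
          have hneg : f g • π g = - ∑ i ∈ s.erase g, f i • π i :=
            eq_neg_of_add_eq_zero_left h0'
          have hπg : π g = vinv • (- ∑ i ∈ s.erase g, f i • π i) := by
            rw [← hneg, smul_smul, hvinv, one_smul]
          rw [hπg]
          refine Submodule.smul_mem _ _ (Submodule.neg_mem _ (Submodule.sum_mem _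
            (fun i hi => Submodule.smul_mem _ _ (Submodule.subset_span
              ⟨i, Finset.mem_coe.2 hi, rfl⟩))))
        · exact Submodule.subset_span ⟨g, Finset.mem_coe.2 (Finset.mem_erase.2 ⟨hgg, hg⟩), rfl⟩
    have final := mu_le_card N ((s.erase g₀).image π)
      (by rw [Finset.coe_image]; exact hNspan)
    calc mu R ↥N ≤ ((s.erase g₀).image π).card := final
      _ ≤ (s.erase g₀).card := Finset.card_image_le
      _ = s.card - 1 := Finset.card_erase_of_mem hg₀s
      _ ≤ n - 1 := Nat.sub_le_sub_right hscard 1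


lemma caseI_final
    (hchain : IsChainRing R) {E : Type u} [AddCommGroup E] [Module R E]
    (n : ℕ) (hn : ∀ N : Submodule R E, N.FG → mu R ↥N ≤ n)
    (dd : R → R) (hdd : ∀ a : R, annOf R a = Ideal.span {dd a})
    (hIF : IsIFRing R)
    (g : E) (hg0 : g ≠ 0) (hgann : annOf R g = ⊥) :
    ∃ U : Submodule R E, U ≠ ⊥ ∧ IsUniserialSub U ∧ IsPureSubmodule U ∧
      ∀ N : Submodule R (E ⧸ U), N.FG → mu R ↥N ≤ n - 1 := by
  apply master hchain n hn dd hdd hIF (fun _ => g) (fun _ _ => 1)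
  · exact fun _ => hg0
  · intro k m _; exact one_smul R g
  · intro b r k _ h
    refine ⟨k, le_rfl, ?_⟩
    have hmem : b * r ∈ annOf R g := mem_annOf.2 h
    rw [hgann, Ideal.mem_bot] at hmem
    rw [mul_one]
    exact hmem
  · intro G _ hall
    have hg : g ∈ maximalIdeal R • G := hall 0
    obtain ⟨b, hbP, e, _, hbe⟩ := smul_factor hchain hg
    have hbnu : ¬ IsUnit b := by
      rwa [← mem_nonunits_iff, ← IsLocalRing.mem_maximalIdeal]
    have hd0 : dd b ≠ 0 := dual_ne_zero dd hdd hIF hbnu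
    apply hd0
    have hmem : dd b ∈ annOf R g := mem_annOf.2
      (by rw [hbe, smul_smul, dual_mul_self dd hdd b, zero_smul])
    rwa [hgann, Ideal.mem_bot] at hmem

lemma upgrade (hchain : IsChainRing R) {E : Type u} [AddCommGroup E] [Module R E]
    (hE : IsFpInjective R E)
    (dd : R → R) (hdd : ∀ a : R, annOf R a = Ideal.span {dd a})
    (hIF : IsIFRing R)
    (x₀ : E) (h0 : x₀ ≠ 0) (c : R) (hc : annOf R x₀ = Ideal.span {c}) (hc0 : c ≠ 0) :
    ∃ g : E, g ≠ 0 ∧ annOf R g = ⊥ := by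
  have hcx : c • x₀ = 0 := mem_annOf.1 (hc ▸ Ideal.mem_span_singleton_self c)
  obtain ⟨y, hy⟩ := exists_smul_eq hE (dd c) x₀ (fun z hz => by
    obtain ⟨t, rfl⟩ := dual_ann dd hdd hIF c z hz
    rw [mul_comm, mul_smul, hcx, smul_zero])
  have hy0 : y ≠ 0 := by rintro rfl; exact h0 (by rw [← hy, smul_zero])
  refine ⟨y, hy0, ?_⟩
  rw [eq_bot_iff]
  intro z hz
  rw [Ideal.mem_bot]
  have hzy : z • y = 0 := mem_annOf.1 hz
  by_contra hz0
  by_cases hzu : IsUnit z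
  · obtain ⟨u, hu⟩ := hzu.exists_left_inv
    apply h0
    rw [← hy]
    have hyy : y = 0 := by
      calc y = (u * z) • y := by rw [hu, one_smul]
        _ = u • (z • y) := by rw [mul_smul]
        _ = 0 := by rw [hzy, smul_zero]
    rw [hyy, smul_zero]
  have hdznu : ¬ IsUnit (dd z) := fun hu => hz0 (eq_zero_of_dual_unit dd hdd hu)
  rcases chain_dvd hchain c (dd z) with ⟨t, ht⟩ | ⟨s, hs⟩
  · have h1 : dd c * dd z = 0 := by
      rw [ht, ← mul_assoc, dual_mul_self dd hdd c, zero_mul]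
    obtain ⟨t', ht'⟩ := dual_ann dd hdd hIF z (dd c) h1
    apply h0
    rw [← hy, ht', mul_comm, mul_smul, hzy, smul_zero]
  · have h1 : (s * dd c) * dd z = 0 := by
      calc (s * dd c) * dd z = dd c * (s * dd z) := by ring
        _ = dd c * c := by rw [mul_comm s (dd z), ← hs]
        _ = 0 := dual_mul_self dd hdd c
    obtain ⟨t', ht'⟩ := dual_ann dd hdd hIF z _ h1
    have h3 : s • x₀ = 0 := by
      rw [← hy, smul_smul, ht', mul_comm, mul_smul, hzy, smul_zero]
    have h4 : c ∣ s := by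
      have hmem : s ∈ annOf R x₀ := mem_annOf.2 h3
      rwa [hc, Ideal.mem_span_singleton] at hmem
    obtain ⟨e, he⟩ := h4
    have h5 : c * (1 - e * dd z) = 0 := by linear_combination hs + dd z * he
    have hednu : e * dd z ∈ maximalIdeal R :=
      Ideal.mul_mem_left _ e ((IsLocalRing.mem_maximalIdeal _).2 hdznu)
    have hu : IsUnit (1 - e * dd z) := isUnit_one_sub_self_of_mem_nonunits _ hednu
    obtain ⟨u, hu'⟩ := hu.exists_right_inv
    apply hc0
    calc c = c * ((1 - e * dd z) * u) := by rw [hu', mul_one]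
      _ = (c * (1 - e * dd z)) * u := by ring
      _ = 0 := by rw [h5, zero_mul]

end Stmt7Aux

open Stmt7Aux in
theorem stmt7 (R : Type u) [CommRing R] [IsLocalRing R]
    (hchain : IsChainRing R) (harch : IsArchimedeanLocal R)
    (hnoeth : ¬ IsNoetherianRing R) (hIF : IsIFRing R)
    (E : Type u) [AddCommGroup E] [Module R E] [Nontrivial E]
    (hE : IsFpInjective R E) (n : ℕ)
    (hn : ∀ N : Submodule R E, N.FG → mu R ↥N ≤ n) :
    ∃ U : Submodule R E, U ≠ ⊥ ∧ IsUniserialSub U ∧ IsPureSubmodule U ∧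
      ∀ N : Submodule R (E ⧸ U), N.FG → mu R ↥N ≤ n - 1 := by
  classical
  obtain ⟨dd, hdd⟩ := exists_dual hchain hIF
  by_cases hI : ∃ x : E, x ≠ 0 ∧ ∃ c : R, annOf R x = Ideal.span {c}
  · obtain ⟨x₀, hx₀, c, hc⟩ := hI
    by_cases hc0 : c = 0
    · subst hc0
      have hann : annOf R x₀ = ⊥ := by rw [hc]; exact Ideal.span_singleton_eq_bot.mpr rfl
      exact caseI_final hchain n hn dd hdd hIF x₀ hx₀ hann
    · obtain ⟨g, hg0, hgann⟩ := upgrade hchain hE dd hdd hIF x₀ hx₀ c hc hc0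
      exact caseI_final hchain n hn dd hdd hIF g hg0 hgann
  · push_neg at hI
    obtain ⟨x₀, hx₀⟩ := exists_ne (0 : E)
    obtain ⟨d, hdP, hdco⟩ := exists_coinitial_seq hchain harch hnoeth
    have hstep : ∀ (m : ℕ) (p : {xx : E // xx ≠ 0}),
        ∃ (q : {xx : E // xx ≠ 0}) (c : R), c • (p : E) = 0 ∧ c ≠ 0 ∧
          (∀ z : R, z • (p : E) = 0 → c ∣ d m * z) ∧ dd c • (q : E) = (p : E) := by
      intro m p
      have hA : annOf R (p : E) ≠ ⊥ := by
        intro h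
        exact hI (p : E) p.2 0 (by rw [h]; exact (Ideal.span_singleton_eq_bot.mpr rfl).symm)
      obtain ⟨c, hcA, hc0, hcdom⟩ := exists_dominating hchain harch (hdP m).1 (hdP m).2 hA
      have hcx : c • (p : E) = 0 := mem_annOf.1 hcA
      obtain ⟨y, hy⟩ := exists_smul_eq hE (dd c) (p : E) (fun z hz => by
        obtain ⟨t, rfl⟩ := dual_ann dd hdd hIF c z hz
        rw [mul_comm, mul_smul, hcx, smul_zero])
      have hy0 : y ≠ 0 := by rintro rfl; exact p.2 (by rw [← hy, smul_zero])
      exact ⟨⟨y, hy0⟩, c, hcx, hc0, fun z hz => hcdom z (mem_annOf.2 hz), hy⟩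
    choose stepf cf hc1 hc2 hc3 hc4 using hstep
    set F : ℕ → {xx : E // xx ≠ 0} :=
      fun m => Nat.rec (motive := fun _ => {xx : E // xx ≠ 0}) ⟨x₀, hx₀⟩
        (fun m p => stepf m p) m with hF
    set xs : ℕ → E := fun m => (F m : E) with hxs
    set cs : ℕ → R := fun m => cf m (F m) with hcs
    have hann0 : ∀ m, cs m • xs m = 0 := fun m => hc1 m (F m)
    have hcs0 : ∀ m, cs m ≠ 0 := fun m => hc2 m (F m)
    have hdom : ∀ m (z : R), z • xs m = 0 → cs m ∣ d m * z := fun m => hc3 m (F m)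
    have hdiv : ∀ m, dd (cs m) • xs (m+1) = xs m := fun m => hc4 m (F m)
    have hxs0 : ∀ m, xs m ≠ 0 := fun m => (F m).2
    set ws : ℕ → ℕ → R := fun k m => ∏ i ∈ Finset.Ico k m, dd (cs i) with hws
    have hwkk : ∀ k, ws k k = 1 := by
      intro k
      rw [hws]
      simp only
      rw [Finset.Ico_self, Finset.prod_empty]
    have hw : ∀ k m, k ≤ m → ws k m • xs m = xs k := by
      intro k m hkm
      induction m, hkm using Nat.le_induction with
      | base => rw [hwkk k, one_smul]
      | succ m hkm ih =>
        have hsucc : ws k (m+1) = ws k m * dd (cs m) := by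
          rw [hws]
          simp only
          rw [Finset.prod_Ico_succ_top hkm]
        rw [hsucc, mul_smul, hdiv m]
        exact ih
    have hmono : ∀ k m, k ≤ m → ∀ z : R, z • xs m = 0 → z • xs k = 0 := by
      intro k m hkm z hz
      rw [← hw k m hkm, smul_smul, mul_comm, mul_smul, hz, smul_zero]
    have hE' : ∀ m (z : R), z • xs (m+1) = 0 → d m * z = 0 := by
      intro m z hz
      rcases chain_dvd hchain z (dd (cs m)) with ⟨t, ht⟩ | ⟨t, ht⟩
      · exact absurd (by rw [← hdiv m, ht, mul_comm z t, mul_smul, hz, smul_zero]) (hxs0 m)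
      · have htann : t • xs m = 0 := by
          rw [← hdiv m, smul_smul, mul_comm t (dd (cs m)), ← ht, hz]
        obtain ⟨h', hh'⟩ := hdom m t htann
        rw [ht]
        calc d m * (dd (cs m) * t) = dd (cs m) * (d m * t) := by ring
          _ = dd (cs m) * (cs m * h') := by rw [hh']
          _ = (dd (cs m) * cs m) * h' := by ring
          _ = 0 := by rw [dual_mul_self dd hdd (cs m), zero_mul]
    have hdag : ∀ e : R, e ∈ maximalIdeal R → e ≠ 0 →
        ∃ m, ∀ z : R, z • xs m = 0 → e * z = 0 := by
      intro e heP he0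
      obtain ⟨j, hj⟩ := hdco e heP he0
      obtain ⟨s, hs⟩ := hj
      refine ⟨j+1, fun z hz => ?_⟩
      have hsz : (s * z) • xs (j+1) = 0 := by rw [mul_smul, hz, smul_zero]
      have h1 := hE' j (s * z) hsz
      calc e * z = d j * (s * z) := by rw [hs]; ring
        _ = 0 := h1
    have hKP : ∀ (b r : R) (k : ℕ), b ≠ 0 → (b * r) • xs k = 0 →
        ∃ m, k ≤ m ∧ b * (r * ws k m) = 0 := by
      intro b r k _ hbr
      by_cases hbr0 : b * r = 0
      · refine ⟨k, le_rfl, ?_⟩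
        rw [hwkk k, mul_one, hbr0]
      · have hmem' : b * r ∈ annOf R (xs k) := mem_annOf.2 hbr
        have hne : annOf R (xs k) ≠ Ideal.span {b * r} := hI (xs k) (hxs0 k) (b*r)
        have hnle : ¬ (annOf R (xs k) ≤ Ideal.span {b * r}) := by
          intro hle
          exact hne (le_antisymm hle ((Ideal.span_singleton_le_iff_mem _).2 hmem'))
        obtain ⟨c', hc'A, hc'ns⟩ := SetLike.not_le_iff_exists.1 hnle
        have hdvd : c' ∣ b * r := by
          rcases chain_dvd hchain (b*r) c' with h | h
          · exact absurd (Ideal.mem_span_singleton.2 h) hc'ns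
          · exact h
        obtain ⟨q, hq⟩ := hdvd
        have hq0 : q ≠ 0 := by rintro rfl; exact hbr0 (by rw [hq, mul_zero])
        have hqnu : ¬ IsUnit q := by
          intro hu
          obtain ⟨u, hu'⟩ := hu.exists_right_inv
          exact hc'ns (Ideal.mem_span_singleton.2
            ⟨u, by linear_combination (-u) * hq + (-c') * hu'⟩)
        obtain ⟨m₀, hm₀⟩ := hdag q ((IsLocalRing.mem_maximalIdeal _).2 hqnu) hq0
        refine ⟨max k m₀, le_max_left _ _, ?_⟩
        have hc'w : (c' * ws k (max k m₀)) • xs (max k m₀) = 0 := by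
          rw [mul_smul, hw k _ (le_max_left _ _)]
          exact mem_annOf.1 hc'A
        have hc'w0 : (c' * ws k (max k m₀)) • xs m₀ = 0 :=
          hmono m₀ _ (le_max_right _ _) _ hc'w
        have hqc := hm₀ _ hc'w0
        calc b * (r * ws k (max k m₀)) = q * (c' * ws k (max k m₀)) := by
              linear_combination (ws k (max k m₀)) * hq
          _ = 0 := hqc
    have hQB : ∀ G : Submodule R E, G.FG → ¬ ∀ m, xs m ∈ (maximalIdeal R) • G := by
      intro G hGfg hall
      obtain ⟨sG, hsG⟩ := hGfg
      have hβgen : ∀ s' : Finset E, ∃ β : R, β ≠ 0 ∧ ∀ g ∈ (↑s' : Set E), β • g = 0 := by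
        intro s'
        induction s' using Finset.induction_on with
        | empty => exact ⟨1, one_ne_zero, by simp⟩
        | @insert g s'' hg ih =>
          obtain ⟨β, hβ0, hβs⟩ := ih
          by_cases hg0 : g = 0
          · refine ⟨β, hβ0, fun g' hg' => ?_⟩
            rcases Set.mem_insert_iff.1 (by rwa [Finset.coe_insert] at hg') with rfl | h
            · rw [hg0, smul_zero]
            · exact hβs g' h
          · have hAg : annOf R g ≠ ⊥ := fun h =>
              hI g hg0 0 (by rw [h]; exact (Ideal.span_singleton_eq_bot.mpr rfl).symm)
            obtain ⟨γ, hγA, hγ0⟩ := (Submodule.ne_bot_iff _).1 hAg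
            rcases chain_dvd hchain β γ with ⟨t, htt⟩ | ⟨t, htt⟩
            · refine ⟨γ, hγ0, fun g' hg' => ?_⟩
              rcases Set.mem_insert_iff.1 (by rwa [Finset.coe_insert] at hg') with rfl | h
              · exact mem_annOf.1 hγA
              · rw [htt, mul_comm, mul_smul, hβs g' h, smul_zero]
            · refine ⟨β, hβ0, fun g' hg' => ?_⟩
              rcases Set.mem_insert_iff.1 (by rwa [Finset.coe_insert] at hg') with rfl | h
              · rw [htt, mul_comm, mul_smul, mem_annOf.1 hγA, smul_zero]
              · exact hβs g' h
      obtain ⟨β, hβ0, hβs⟩ := hβgen sG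
      have hβG : G ≤ LinearMap.ker (β • (LinearMap.id : E →ₗ[R] E)) := by
        rw [← hsG, Submodule.span_le]
        intro z hz
        rw [SetLike.mem_coe, LinearMap.mem_ker, LinearMap.smul_apply, LinearMap.id_apply]
        exact hβs z hz
      have hβx : ∀ m, β • xs m = 0 := by
        intro m
        have h1 : xs m ∈ G := Submodule.smul_le_right (hall m)
        have h2 := hβG h1
        rwa [LinearMap.mem_ker, LinearMap.smul_apply, LinearMap.id_apply] at h2
      have hPβ : maximalIdeal R ≤ annOf R β := by
        intro e heP
        rw [mem_annOf, smul_eq_mul]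
        by_cases he0 : e = 0
        · rw [he0, zero_mul]
        · obtain ⟨m₀, hm₀⟩ := hdag e heP he0
          exact hm₀ β (hβx m₀)
      have hddβnu : ¬ IsUnit (dd β) := fun hu => hβ0 (eq_zero_of_dual_unit dd hdd hu)
      have hPspan : maximalIdeal R = Ideal.span {dd β} := by
        apply le_antisymm
        · rw [← hdd]; exact hPβ
        · rw [Ideal.span_le, Set.singleton_subset_iff]
          exact (IsLocalRing.mem_maximalIdeal _).2 hddβnu
      exact hnoeth (noetherian_of_principal_max hchain harch hPspan)
    exact master hchain n hn dd hdd hIF xs ws hxs0 hw hKP hQB
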